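/- Let N, δ > 0 with μ + δ < N. There exists ε > 0 such that for every admissible control r and every (x,y) in the triangle T_{N,δ}, one has γ − β S^r(u^r(x,y)) ≥ ε, where S^r, I^r is the solution of the controlled SIR system with control r and initial data (x,y) and u^r(x,y) is the corresponding eradication time. -/

import Mathlib

open MeasureTheory Set Filter Topology
open scoped Classical

noncomputable section

/-- An admissible vaccination-rate control: a measurable `r : ℝ → ℝ` with
`0 ≤ r t ≤ 1` for a.e. `t ≥ 0`. -/
def Admissible (r : ℝ → ℝ) : Prop :=
  Measurable r ∧ ∀ᵐ t : ℝ ∂volume, 0 ≤ t → 0 ≤ r t ∧ r t ≤ 1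

/-- `S, I` is a solution of the controlled SIR system with parameters `β, γ`,
control `r`, and initial data `x, y`:  they are continuous on `[0,∞)` and satisfy
`S t = x - ∫₀ᵗ (β S I + r S)` and `I t = y + ∫₀ᵗ (β S I - γ I)` for all `t ≥ 0`. -/
def IsSIRSol (β γ : ℝ) (r : ℝ → ℝ) (x y : ℝ) (S I : ℝ → ℝ) : Prop :=
  ContinuousOn S (Ici 0) ∧ ContinuousOn I (Ici 0) ∧
  (∀ t : ℝ, 0 ≤ t → S t = x - ∫ s in (0:ℝ)..t, (β * S s * I s + r s * S s)) ∧
  (∀ t : ℝ, 0 ≤ t → I t = y + ∫ s in (0:ℝ)..t, (β * S s * I s - γ * I s))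

/-- The susceptible component `S^r` of the solution of the controlled SIR system
(chosen via choice; it is unique on `[0,∞)`). -/
def sirS (β γ : ℝ) (r : ℝ → ℝ) (x y : ℝ) : ℝ → ℝ :=
  if h : ∃ p : (ℝ → ℝ) × (ℝ → ℝ), IsSIRSol β γ r x y p.1 p.2 then h.choose.1 else 0

/-- The infected component `I^r` of the solution of the controlled SIR system. -/
def sirI (β γ : ℝ) (r : ℝ → ℝ) (x y : ℝ) : ℝ → ℝ :=
  if h : ∃ p : (ℝ → ℝ) × (ℝ → ℝ), IsSIRSol β γ r x y p.1 p.2 then h.choose.2 else 0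

/-- The eradication time `u^r(x,y) = min { t ≥ 0 : I^r(t) = μ }`. -/
def eradTime (β γ μ : ℝ) (r : ℝ → ℝ) (x y : ℝ) : ℝ :=
  sInf {t : ℝ | 0 ≤ t ∧ sirI β γ r x y t = μ}

/-- The value function `u(x,y) = inf { u^r(x,y) : r admissible }`. -/
def value (β γ μ : ℝ) (x y : ℝ) : ℝ :=
  sInf {T : ℝ | ∃ r : ℝ → ℝ, Admissible r ∧ T = eradTime β γ μ r x y}

/-- The triangle `T_{N,δ} = {(x,y) : x ≥ δ, y ≥ μ + δ, x + y ≤ N}`. -/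
def Triangle (μ N δ : ℝ) : Set (ℝ × ℝ) :=
  {p : ℝ × ℝ | δ ≤ p.1 ∧ μ + δ ≤ p.2 ∧ p.1 + p.2 ≤ N}

/-- The partial derivative `∂ₓ u^r(z,w)` of the eradication time. -/
def uDx (β γ μ : ℝ) (r : ℝ → ℝ) (z w : ℝ) : ℝ :=
  deriv (fun a => eradTime β γ μ r a w) z

/-- The partial derivative `∂_y u^r(z,w)` of the eradication time. -/
def uDy (β γ μ : ℝ) (r : ℝ → ℝ) (z w : ℝ) : ℝ :=
  deriv (fun b => eradTime β γ μ r z b) w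

/-- The switching control `r_τ`: `0` on `[0,τ]` and `1` on `(τ,∞)`. -/
def switchCtrl (τ : ℝ) : ℝ → ℝ := fun t => if t ≤ τ then 0 else 1

section Aux

variable {β γ μ : ℝ} {r : ℝ → ℝ} {x y : ℝ} {S I : ℝ → ℝ}

lemma f2_intble (hsol : IsSIRSol β γ r x y S I) {a b : ℝ} (ha : 0 ≤ a) (hab : a ≤ b) :
    IntervalIntegrable (fun s => β * S s * I s - γ * I s) volume a b := by
  apply ContinuousOn.intervalIntegrable
  have hsub : uIcc a b ⊆ Ici 0 := by
    rw [uIcc_of_le hab]; exact fun t ht => le_trans ha ht.1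
  exact ((continuousOn_const.mul (hsol.1.mono hsub)).mul ((hsol.2.1).mono hsub)).sub
    (continuousOn_const.mul ((hsol.2.1).mono hsub))

lemma f1_intble (hsol : IsSIRSol β γ r x y S I) (hr : Admissible r) {a b : ℝ}
    (ha : 0 ≤ a) (hab : a ≤ b) :
    IntervalIntegrable (fun s => β * S s * I s + r s * S s) volume a b := by
  rw [intervalIntegrable_iff_integrableOn_Icc_of_le hab]
  have hsub : Icc a b ⊆ Ici 0 := fun t ht => le_trans ha ht.1
  have hScont : ContinuousOn S (Icc a b) := hsol.1.mono hsub
  have hIcont : ContinuousOn I (Icc a b) := (hsol.2.1).mono hsub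
  have hpart1 : IntegrableOn (fun s => β * S s * I s) (Icc a b) volume :=
    ((continuousOn_const.mul hScont).mul hIcont).integrableOn_compact isCompact_Icc
  have hpart2 : IntegrableOn (fun s => r s * S s) (Icc a b) volume := by
    obtain ⟨C, hC⟩ := isCompact_Icc.exists_bound_of_continuousOn hScont
    have hCint : IntegrableOn (fun _ : ℝ => C) (Icc a b) volume :=
      integrableOn_const measure_Icc_lt_top.ne
    apply Integrable.mono' hCint
    · exact ((hr.1.aemeasurable).mul (hScont.aemeasurable measurableSet_Icc)).aestronglyMeasurable
    · filter_upwards [ae_restrict_of_ae hr.2, ae_restrict_mem measurableSet_Icc] with t h1 h2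
      obtain ⟨hr0, hr1⟩ := h1 (hsub h2)
      have hSb := hC t h2
      rw [Real.norm_eq_abs] at hSb ⊢
      rw [abs_mul]
      calc |r t| * |S t| ≤ 1 * C := by
            apply mul_le_mul _ hSb (abs_nonneg _) zero_le_one
            rw [abs_of_nonneg hr0]; exact hr1
        _ = C := one_mul C
  exact hpart1.add hpart2

lemma S_diff (hsol : IsSIRSol β γ r x y S I) (hr : Admissible r) {s t : ℝ}
    (hs : 0 ≤ s) (hst : s ≤ t) :
    S s - S t = ∫ u in s..t, (β * S u * I u + r u * S u) := by
  have h1 := hsol.2.2.1 s hs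
  have h2 := hsol.2.2.1 t (hs.trans hst)
  have h3 := intervalIntegral.integral_add_adjacent_intervals
    (f1_intble hsol hr le_rfl hs) (f1_intble hsol hr hs hst)
  rw [h1, h2]; linarith

lemma I_diff (hsol : IsSIRSol β γ r x y S I) {s t : ℝ}
    (hs : 0 ≤ s) (hst : s ≤ t) :
    I t - I s = ∫ u in s..t, (β * S u * I u - γ * I u) := by
  have h1 := hsol.2.2.2 s hs
  have h2 := hsol.2.2.2 t (hs.trans hst)
  have h3 := intervalIntegral.integral_add_adjacent_intervals
    (f2_intble hsol le_rfl hs) (f2_intble hsol hs hst)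
  rw [h1, h2]; linarith

lemma S_zero (hsol : IsSIRSol β γ r x y S I) : S 0 = x := by
  have := hsol.2.2.1 0 le_rfl; simpa using this

lemma I_zero (hsol : IsSIRSol β γ r x y S I) : I 0 = y := by
  have := hsol.2.2.2 0 le_rfl; simpa using this
lemma S_nonneg (hβ : 0 < β) (hsol : IsSIRSol β γ r x y S I) (hr : Admissible r)
    (hx : 0 < x) {T : ℝ} (hT : 0 ≤ T)
    (hIpos : ∀ t ∈ Icc (0:ℝ) T, 0 ≤ I t) : ∀ t ∈ Icc (0:ℝ) T, 0 ≤ S t := by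
  intro t₀ ht₀
  by_contra hneg
  push_neg at hneg
  have hS0 : S 0 = x := S_zero hsol
  have hsub : Icc (0:ℝ) t₀ ⊆ Ici 0 := fun u hu => hu.1
  have hScont : ContinuousOn S (Icc 0 t₀) := hsol.1.mono hsub
  set A := Icc (0:ℝ) t₀ ∩ S ⁻¹' {0} with hA
  have hA_closed : IsClosed A :=
    hScont.preimage_isClosed_of_isClosed isClosed_Icc isClosed_singleton
  have hAne : A.Nonempty := by
    have h0 : (0:ℝ) ∈ Icc (S t₀) (S 0) := ⟨hneg.le, by rw [hS0]; exact hx.le⟩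
    obtain ⟨t₁, ht₁, hSt₁⟩ := intermediate_value_Icc' ht₀.1 hScont h0
    exact ⟨t₁, ht₁, hSt₁⟩
  have hbdd : BddAbove A := ⟨t₀, fun u hu => hu.1.2⟩
  set t₁ := sSup A with ht₁def
  have ht₁A : t₁ ∈ A := hA_closed.csSup_mem hAne hbdd
  have ht₁0 : 0 ≤ t₁ := ht₁A.1.1
  have ht₁t₀ : t₁ ≤ t₀ := ht₁A.1.2
  have hSt₁ : S t₁ = 0 := ht₁A.2
  have hle : ∀ u ∈ Icc t₁ t₀, S u ≤ 0 := by
    intro u hu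
    by_contra hpos; push_neg at hpos
    have hc2 : ContinuousOn S (Icc u t₀) :=
      hScont.mono (Icc_subset_Icc (ht₁0.trans hu.1) le_rfl)
    obtain ⟨t₂, ht₂, hSt₂⟩ := intermediate_value_Icc' hu.2 hc2 ⟨hneg.le, hpos.le⟩
    have ht₂A : t₂ ∈ A := ⟨⟨(ht₁0.trans hu.1).trans ht₂.1, ht₂.2⟩, hSt₂⟩
    have hsup := le_csSup hbdd ht₂A
    have huts : u = t₂ := le_antisymm ht₂.1 (hsup.trans hu.1)
    rw [huts, hSt₂] at hpos
    exact lt_irrefl 0 hpos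
  have hdiff : S t₁ - S t₀ = ∫ u in t₁..t₀, (β * S u * I u + r u * S u) :=
    S_diff hsol hr ht₁0 ht₁t₀
  have hint_le : (∫ u in t₁..t₀, (β * S u * I u + r u * S u)) ≤
      ∫ _ in t₁..t₀, (0:ℝ) := by
    apply intervalIntegral.integral_mono_ae_restrict ht₁t₀
      (f1_intble hsol hr ht₁0 ht₁t₀) intervalIntegrable_const
    filter_upwards [ae_restrict_of_ae hr.2, ae_restrict_mem measurableSet_Icc] with u h1 h2
    have h0u : (0:ℝ) ≤ u := ht₁0.trans h2.1
    obtain ⟨hr0, hr1⟩ := h1 h0u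
    have hSu := hle u h2
    have hIu := hIpos u ⟨h0u, h2.2.trans ht₀.2⟩
    have : β * S u * I u ≤ 0 := by nlinarith [mul_nonneg hβ.le hIu]
    have h2' : r u * S u ≤ 0 := mul_nonpos_of_nonneg_of_nonpos hr0 hSu
    simpa using add_nonpos this h2'
  rw [intervalIntegral.integral_zero] at hint_le
  rw [hSt₁] at hdiff
  linarith

lemma S_anti (hβ : 0 < β) (hsol : IsSIRSol β γ r x y S I) (hr : Admissible r)
    (hx : 0 < x) {T : ℝ} (hT : 0 ≤ T)
    (hIpos : ∀ t ∈ Icc (0:ℝ) T, 0 ≤ I t) :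
    ∀ s ∈ Icc (0:ℝ) T, ∀ t ∈ Icc (0:ℝ) T, s ≤ t → S t ≤ S s := by
  have hSn := S_nonneg hβ hsol hr hx hT hIpos
  intro s hs t ht hst
  have hdiff : S s - S t = ∫ u in s..t, (β * S u * I u + r u * S u) :=
    S_diff hsol hr hs.1 hst
  have hint : (∫ _ in s..t, (0:ℝ)) ≤ ∫ u in s..t, (β * S u * I u + r u * S u) := by
    apply intervalIntegral.integral_mono_ae_restrict hst intervalIntegrable_const
      (f1_intble hsol hr hs.1 hst)
    filter_upwards [ae_restrict_of_ae hr.2, ae_restrict_mem measurableSet_Icc] with u h1 h2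
    have h0u : (0:ℝ) ≤ u := hs.1.trans h2.1
    obtain ⟨hr0, hr1⟩ := h1 h0u
    have hmem : u ∈ Icc (0:ℝ) T := ⟨h0u, h2.2.trans ht.2⟩
    have hSu := hSn u hmem
    have hIu := hIpos u hmem
    have : (0:ℝ) ≤ β * S u * I u := by positivity
    have h2' : (0:ℝ) ≤ r u * S u := mul_nonneg hr0 hSu
    simpa using add_nonneg this h2'
  rw [intervalIntegral.integral_zero] at hint
  linarith
lemma I_le (hβ : 0 < β) (hγ : 0 < γ) (hsol : IsSIRSol β γ r x y S I) (hr : Admissible r)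
    (hx : 0 < x) {T : ℝ} (hT : 0 ≤ T)
    (hIpos : ∀ t ∈ Icc (0:ℝ) T, 0 ≤ I t) :
    ∀ t ∈ Icc (0:ℝ) T, I t ≤ x + y := by
  have hSn := S_nonneg hβ hsol hr hx hT hIpos
  intro t ht
  have h1 := hsol.2.2.1 t ht.1
  have h2 := hsol.2.2.2 t ht.1
  have hsum : S t + I t = x + y -
      ((∫ u in (0:ℝ)..t, (β * S u * I u + r u * S u)) -
       (∫ u in (0:ℝ)..t, (β * S u * I u - γ * I u))) := by
    rw [h1, h2]; ring
  have hsub : (∫ u in (0:ℝ)..t, (β * S u * I u + r u * S u)) -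
      (∫ u in (0:ℝ)..t, (β * S u * I u - γ * I u)) =
      ∫ u in (0:ℝ)..t, ((β * S u * I u + r u * S u) - (β * S u * I u - γ * I u)) :=
    (intervalIntegral.integral_sub (f1_intble hsol hr le_rfl ht.1)
      (f2_intble hsol le_rfl ht.1)).symm
  have hnn : (0:ℝ) ≤ ∫ u in (0:ℝ)..t,
      ((β * S u * I u + r u * S u) - (β * S u * I u - γ * I u)) := by
    have h0 : (∫ _ in (0:ℝ)..t, (0:ℝ)) ≤ ∫ u in (0:ℝ)..t,
        ((β * S u * I u + r u * S u) - (β * S u * I u - γ * I u)) := by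
      apply intervalIntegral.integral_mono_ae_restrict ht.1 intervalIntegrable_const
        ((f1_intble hsol hr le_rfl ht.1).sub (f2_intble hsol le_rfl ht.1))
      filter_upwards [ae_restrict_of_ae hr.2, ae_restrict_mem measurableSet_Icc] with u hu1 hu2
      obtain ⟨hr0, _⟩ := hu1 hu2.1
      have hmem : u ∈ Icc (0:ℝ) T := ⟨hu2.1, hu2.2.trans ht.2⟩
      have hSu := hSn u hmem
      have hIu := hIpos u hmem
      have : (0:ℝ) ≤ r u * S u + γ * I u :=
        add_nonneg (mul_nonneg hr0 hSu) (mul_nonneg hγ.le hIu)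
      simpa using this
    simpa using h0
  rw [hsub] at hsum
  have hSt := hSn t ht
  linarith

lemma S_decay (hβ : 0 < β) (hμ : 0 < μ) (hsol : IsSIRSol β γ r x y S I) (hr : Admissible r)
    (hx : 0 < x) {T : ℝ} (hT : 0 ≤ T)
    (hIge : ∀ t ∈ Icc (0:ℝ) T, μ ≤ I t) :
    ∀ t ∈ Icc (0:ℝ) T, β * μ * t * S t ≤ x - S t := by
  have hIpos : ∀ t ∈ Icc (0:ℝ) T, 0 ≤ I t := fun t ht => hμ.le.trans (hIge t ht)
  have hSn := S_nonneg hβ hsol hr hx hT hIpos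
  have hSa := S_anti hβ hsol hr hx hT hIpos
  intro t ht
  have hdiff : S 0 - S t = ∫ u in (0:ℝ)..t, (β * S u * I u + r u * S u) :=
    S_diff hsol hr le_rfl ht.1
  have hlow : (∫ _ in (0:ℝ)..t, (β * μ * S t)) ≤
      ∫ u in (0:ℝ)..t, (β * S u * I u + r u * S u) := by
    apply intervalIntegral.integral_mono_ae_restrict ht.1 intervalIntegrable_const
      (f1_intble hsol hr le_rfl ht.1)
    filter_upwards [ae_restrict_of_ae hr.2, ae_restrict_mem measurableSet_Icc] with u hu1 hu2
    obtain ⟨hr0, _⟩ := hu1 hu2.1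
    have hmem : u ∈ Icc (0:ℝ) T := ⟨hu2.1, hu2.2.trans ht.2⟩
    have hSu := hSn u hmem
    have hIu := hIge u hmem
    have hmono := hSa u hmem t ht hu2.2
    have h1 : β * μ * S t ≤ β * μ * S u :=
      mul_le_mul_of_nonneg_left hmono (mul_nonneg hβ.le hμ.le)
    have h2 : β * μ * S u ≤ β * S u * I u := by
      nlinarith [mul_le_mul_of_nonneg_left hIu (mul_nonneg hβ.le hSu)]
    have h3 : (0:ℝ) ≤ r u * S u := mul_nonneg hr0 hSu
    linarith
  rw [intervalIntegral.integral_const] at hlow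
  rw [S_zero hsol] at hdiff
  simp only [smul_eq_mul, sub_zero] at hlow
  nlinarith [hlow, hdiff]

lemma I_lower (hβ : 0 < β) (hμ : 0 < μ) (hsol : IsSIRSol β γ r x y S I) (hr : Admissible r)
    (hx : 0 < x) (hγ : 0 < γ) {T ε : ℝ} (hT : 0 ≤ T) (hε : 0 ≤ ε)
    (hIge : ∀ t ∈ Icc (0:ℝ) T, μ ≤ I t)
    (hSl : ∀ t ∈ Icc (0:ℝ) T, γ - β * S t ≤ ε) :
    y - ε * (x + y) * T ≤ I T := by
  have hIpos : ∀ t ∈ Icc (0:ℝ) T, 0 ≤ I t := fun t ht => hμ.le.trans (hIge t ht)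
  have hIle := I_le hβ hγ hsol hr hx hT hIpos
  have hdiff : I T - I 0 = ∫ u in (0:ℝ)..T, (β * S u * I u - γ * I u) :=
    I_diff hsol le_rfl hT
  have hlow : (∫ _ in (0:ℝ)..T, (-(ε * (x + y)))) ≤
      ∫ u in (0:ℝ)..T, (β * S u * I u - γ * I u) := by
    apply intervalIntegral.integral_mono_on hT intervalIntegrable_const
      (f2_intble hsol le_rfl hT)
    intro u hu
    have hIu := hIpos u hu
    have hIub := hIle u hu
    have hSu := hSl u hu
    have hxy : (0:ℝ) ≤ x + y := le_trans hIu hIub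
    nlinarith [mul_nonneg (sub_nonneg.2 hSu) hIu, mul_nonneg hε (sub_nonneg.2 hIub)]
  rw [intervalIntegral.integral_const] at hlow
  rw [I_zero hsol] at hdiff
  simp only [smul_eq_mul, sub_zero] at hlow
  nlinarith [hlow, hdiff]
lemma hits (hβ : 0 < β) (hγ : 0 < γ) (hμ : 0 < μ) (hsol : IsSIRSol β γ r x y S I)
    (hr : Admissible r) (hx : 0 < x) (hy : μ < y) :
    ∃ t, 0 ≤ t ∧ I t = μ := by
  by_contra hno
  push_neg at hno
  have hI0 : I 0 = y := I_zero hsol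
  have hIgt : ∀ t, 0 ≤ t → μ < I t := by
    intro t ht
    rcases lt_or_ge μ (I t) with h | h
    · exact h
    have hlt : I t < μ := lt_of_le_of_ne h (hno t ht)
    have hIc : ContinuousOn I (Icc 0 t) := (hsol.2.1).mono (fun u hu => hu.1)
    obtain ⟨s, hs, hIs⟩ := intermediate_value_Icc' ht hIc ⟨hlt.le, by rw [hI0]; exact hy.le⟩
    exact absurd hIs (hno s hs.1)
  obtain ⟨T₀, hT₀def⟩ : ∃ T₀ : ℝ, T₀ = 2*x/(μ*γ) := ⟨_, rfl⟩
  obtain ⟨T₁, hT₁def⟩ : ∃ T₁ : ℝ, T₁ = T₀ + 2*(x+y)/(γ*μ) + 1 := ⟨_, rfl⟩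
  have hy0 : 0 < y := hμ.trans hy
  have hT₀pos : 0 < T₀ := by rw [hT₀def]; positivity
  have hT₀T₁ : T₀ ≤ T₁ := by
    have h : 0 ≤ 2*(x+y)/(γ*μ) := by positivity
    rw [hT₁def]; linarith
  have hT₁0 : 0 ≤ T₁ := hT₀pos.le.trans hT₀T₁
  have hIge : ∀ t ∈ Icc (0:ℝ) T₁, μ ≤ I t := fun t ht => (hIgt t ht.1).le
  have hIpos : ∀ t ∈ Icc (0:ℝ) T₁, 0 ≤ I t := fun t ht => hμ.le.trans (hIge t ht)
  have hSn := S_nonneg hβ hsol hr hx hT₁0 hIpos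
  have hIle := I_le hβ hγ hsol hr hx hT₁0 hIpos
  have hSd := S_decay hβ hμ hsol hr hx hT₁0 hIge
  have hT₀eq : μ*γ*T₀ = 2*x := by
    rw [hT₀def]; field_simp
  -- on [T₀, T₁], β S u ≤ γ/2
  have hSbound : ∀ u ∈ Icc T₀ T₁, β * S u ≤ γ/2 := by
    intro u hu
    have h0u : (0:ℝ) ≤ u := hT₀pos.le.trans hu.1
    have hmem : u ∈ Icc (0:ℝ) T₁ := ⟨h0u, hu.2⟩
    have h1 : β*μ*u*S u ≤ x - S u := hSd u hmem
    have hSu0 : 0 ≤ S u := hSn u hmem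
    have e1 : 0 ≤ γ*β*μ*((u - T₀)*S u) := by
      have := mul_nonneg (sub_nonneg.2 hu.1) hSu0
      positivity
    have e2 : γ*(β*μ*u*S u) ≤ γ*(x - S u) := mul_le_mul_of_nonneg_left h1 hγ.le
    have e3 : β*S u*(μ*γ*T₀) = β*S u*(2*x) := by rw [hT₀eq]
    have hkey : (2*β*S u)*x ≤ γ*x := by nlinarith [mul_nonneg hγ.le hSu0]
    have := le_of_mul_le_mul_right hkey hx
    linarith
  -- decay of I on [T₀, T₁]
  have hdiff : I T₁ - I T₀ = ∫ u in T₀..T₁, (β * S u * I u - γ * I u) :=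
    I_diff hsol hT₀pos.le hT₀T₁
  have hup : (∫ u in T₀..T₁, (β * S u * I u - γ * I u)) ≤
      ∫ _ in T₀..T₁, (-(γ/2*μ)) := by
    apply intervalIntegral.integral_mono_on hT₀T₁ (f2_intble hsol hT₀pos.le hT₀T₁)
      intervalIntegrable_const
    intro u hu
    have h0u : (0:ℝ) ≤ u := hT₀pos.le.trans hu.1
    have hmem : u ∈ Icc (0:ℝ) T₁ := ⟨h0u, hu.2⟩
    have hIu := hIge u hmem
    have hβS := hSbound u hu
    nlinarith [mul_le_mul_of_nonneg_right (sub_le_sub_right hβS γ) (hμ.le.trans hIu)]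
  rw [intervalIntegral.integral_const] at hup
  simp only [smul_eq_mul] at hup
  have hIT₀ : I T₀ ≤ x + y := hIle T₀ ⟨hT₀pos.le, hT₀T₁⟩
  have hIT₁ : μ ≤ I T₁ := hIge T₁ ⟨hT₁0, le_rfl⟩
  have harith : γ*μ*(2*(x+y)/(γ*μ)) = 2*(x+y) := by field_simp
  have hgap : T₁ - T₀ = 2*(x+y)/(γ*μ) + 1 := by rw [hT₁def]; ring
  nlinarith [hdiff, hup, hIT₀, hIT₁]
end Aux

/-- Uniform nondegeneracy at eradication: on the triangle
`T_{N,δ}` there is `ε > 0` with `γ - β S^r(u^r(x,y)) ≥ ε` for all admissible `r`. -/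
theorem uniform_nondegeneracy
    (β γ μ : ℝ) (hβ : 0 < β) (hγ : 0 < γ) (hμ : 0 < μ)
    (N δ : ℝ) (hδ : 0 < δ) (hN : μ + δ < N) :
    ∃ ε : ℝ, 0 < ε ∧
      ∀ r : ℝ → ℝ, Admissible r → ∀ p ∈ Triangle μ N δ,
        ε ≤ γ - β * sirS β γ r p.1 p.2 (eradTime β γ μ r p.1 p.2) := by
  have hN0 : 0 < N := by linarith
  refine ⟨min (γ/2) (δ*μ*γ/(2*N^2)), lt_min (by positivity) (by positivity), ?_⟩
  set ε := min (γ/2) (δ*μ*γ/(2*N^2)) with hεdef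
  have hε1 : ε ≤ γ/2 := min_le_left _ _
  have hε2 : ε ≤ δ*μ*γ/(2*N^2) := min_le_right _ _
  have hεpos : 0 < ε := lt_min (by positivity) (by positivity)
  intro r hr p hp
  obtain ⟨hx1, hy1, hxy⟩ := hp
  set x := p.1
  set y := p.2
  have hx : 0 < x := hδ.trans_le hx1
  have hy : μ < y := by linarith
  by_cases hex : ∃ q : (ℝ → ℝ) × (ℝ → ℝ), IsSIRSol β γ r x y q.1 q.2
  · have hS_eq : sirS β γ r x y = hex.choose.1 := by rw [sirS, dif_pos hex]
    have hI_eq : sirI β γ r x y = hex.choose.2 := by rw [sirI, dif_pos hex]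
    set S := hex.choose.1 with hSdef
    set I := hex.choose.2 with hIdef
    have hsol : IsSIRSol β γ r x y S I := hex.choose_spec
    -- the hitting set
    have hEeq : {t : ℝ | 0 ≤ t ∧ sirI β γ r x y t = μ} = Ici 0 ∩ I ⁻¹' {μ} := by
      ext t; simp [hI_eq, and_comm]
    have hE_closed : IsClosed ({t : ℝ | 0 ≤ t ∧ sirI β γ r x y t = μ}) := by
      rw [hEeq]
      exact (hsol.2.1).preimage_isClosed_of_isClosed isClosed_Ici isClosed_singleton
    have hE_ne : ({t : ℝ | 0 ≤ t ∧ sirI β γ r x y t = μ}).Nonempty := by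
      obtain ⟨t, ht0, htμ⟩ := hits hβ hγ hμ hsol hr hx hy
      exact ⟨t, ht0, by rw [hI_eq]; exact htμ⟩
    have hE_bdd : BddBelow ({t : ℝ | 0 ≤ t ∧ sirI β γ r x y t = μ}) :=
      ⟨0, fun t ht => ht.1⟩
    have huE : eradTime β γ μ r x y ∈ {t : ℝ | 0 ≤ t ∧ sirI β γ r x y t = μ} :=
      hE_closed.csInf_mem hE_ne hE_bdd
    set u := eradTime β γ μ r x y with hudef
    have hu0 : 0 ≤ u := huE.1
    have hIu : I u = μ := by rw [← hI_eq]; exact huE.2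
    have hI0 : I 0 = y := I_zero hsol
    have hupos : 0 < u := by
      rcases hu0.lt_or_eq with h | h
      · exact h
      · exfalso; rw [← h, hI0] at hIu; exact absurd hIu (ne_of_gt hy)
    -- I ≥ μ on [0, u]
    have hIge : ∀ t ∈ Icc (0:ℝ) u, μ ≤ I t := by
      intro t ht
      by_contra hlt
      push_neg at hlt
      have hIc : ContinuousOn I (Icc 0 t) := (hsol.2.1).mono (fun v hv => hv.1)
      obtain ⟨s, hs, hIs⟩ := intermediate_value_Icc' ht.1 hIc ⟨hlt.le, by rw [hI0]; exact hy.le⟩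
      have hsE : s ∈ {t : ℝ | 0 ≤ t ∧ sirI β γ r x y t = μ} := ⟨hs.1, by rw [hI_eq]; exact hIs⟩
      have hus : u ≤ s := csInf_le hE_bdd hsE
      have htu : t = u := le_antisymm ht.2 (hus.trans hs.2)
      rw [htu, hIu] at hlt
      exact lt_irrefl μ hlt
    -- main estimate
    rw [hS_eq]
    by_contra hcon
    push_neg at hcon
    have hIpos : ∀ t ∈ Icc (0:ℝ) u, 0 ≤ I t := fun t ht => hμ.le.trans (hIge t ht)
    have hSn := S_nonneg hβ hsol hr hx hu0 hIpos
    have hSa := S_anti hβ hsol hr hx hu0 hIpos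
    have hSd := S_decay hβ hμ hsol hr hx hu0 hIge
    have huu : u ∈ Icc (0:ℝ) u := ⟨hu0, le_rfl⟩
    have hSu0 : 0 ≤ S u := hSn u huu
    have hβSu : γ/2 < β * S u := by linarith
    have hxN : x ≤ N := by linarith
    have hd : β*μ*u*S u ≤ x - S u := hSd u huu
    have huN : μ*γ*u < 2*N := by
      nlinarith [mul_pos (mul_pos hμ hupos) (sub_pos.2 hβSu)]
    have hSl : ∀ t ∈ Icc (0:ℝ) u, γ - β * S t ≤ ε := by
      intro t ht
      have hmono := hSa t ht u huu ht.2
      nlinarith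
    have hIlow := I_lower hβ hμ hsol hr hx hγ hu0 hεpos.le hIge hSl
    rw [hIu] at hIlow
    have hδle : δ ≤ ε*N*u := by
      nlinarith [mul_nonneg (mul_nonneg hεpos.le hu0) (sub_nonneg.2 hxy)]
    have hε2' : ε*(2*N^2) ≤ δ*μ*γ := (le_div_iff₀ (by positivity)).mp hε2
    have hδle2 : μ*γ*δ ≤ μ*γ*(ε*N*u) := mul_le_mul_of_nonneg_left hδle (by positivity)
    have hfin : ε*N*(μ*γ*u) < ε*N*(2*N) := mul_lt_mul_of_pos_left huN (mul_pos hεpos hN0)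
    nlinarith [hδle2, hfin, hε2']
  · have hS_eq : sirS β γ r x y = 0 := by rw [sirS, dif_neg hex]
    rw [hS_eq]
    simp only [Pi.zero_apply, mul_zero, sub_zero]
    linarith
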